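/- arXiv:0902.1038 — 2 statements merged into one kernel-verified Lean document; each statement's English description precedes it below -/
import Mathlib

section
/- In an optimal (minimum weighted external path length) binary tree for positive weights, every node at depth ℓ has weight at most n/2^{⌊ℓ/2⌋}, where n is the total weight. -/
/-- Binary trees with natural-number weights at the leaves. -/
inductive BTree where
  | leaf : ℕ → BTree
  | node : BTree → BTree → BTree

namespace BTree

/-- Total weight: sum of the leaf weights. -/
def weight : BTree → ℕ
  | leaf w => w
  | node l r => weight l + weight r

/-- Weighted external path length: `∑ (leaf weight)·(leaf depth)`. -/
def cost : BTree → ℕ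
  | leaf _ => 0
  | node l r => cost l + cost r + weight l + weight r

/-- The multiset of leaf weights. -/
def leaves : BTree → Multiset ℕ
  | leaf w => {w}
  | node l r => leaves l + leaves r

/-- `SubtreeAt T d v` means `v` is a node of `T` at depth `d`. -/
inductive SubtreeAt : BTree → ℕ → BTree → Prop
  | refl (t : BTree) : SubtreeAt t 0 t
  | left {l r v : BTree} {d : ℕ} : SubtreeAt l d v → SubtreeAt (node l r) (d + 1) v
  | right {l r v : BTree} {d : ℕ} : SubtreeAt r d v → SubtreeAt (node l r) (d + 1) v

lemma weight_eq_sum (t : BTree) : t.weight = t.leaves.sum := by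
  induction t with
  | leaf w => simp [weight, leaves]
  | node l r ihl ihr => simp [weight, leaves, ihl, ihr]

lemma weight_mono {T v : BTree} {d : ℕ} (h : SubtreeAt T d v) : v.weight ≤ T.weight := by
  induction h with
  | refl t => exact le_rfl
  | left h ih => exact ih.trans (Nat.le_add_right _ _)
  | right h ih => exact ih.trans (Nat.le_add_left _ _)

lemma replace {T s : BTree} {d : ℕ} (h : SubtreeAt T d s) (s' : BTree)
    (hl : s'.leaves = s.leaves) :
    ∃ T' : BTree, T'.leaves = T.leaves ∧ T'.cost + s.cost = T.cost + s'.cost := by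
  induction h with
  | refl t => exact ⟨s', hl, by omega⟩
  | @left l r v _ h ih =>
      obtain ⟨l', hl', hc⟩ := ih hl
      have hw : l'.weight = l.weight := by rw [weight_eq_sum, weight_eq_sum, hl']
      exact ⟨node l' r, by simp [leaves, hl'], by simp [cost, hw]; omega⟩
  | @right l r v _ h ih =>
      obtain ⟨r', hr', hc⟩ := ih hl
      have hw : r'.weight = r.weight := by rw [weight_eq_sum, weight_eq_sum, hr']
      exact ⟨node l r', by simp [leaves, hr'], by simp [cost, hw]; omega⟩

lemma parent_exists {T v : BTree} {d : ℕ} (h : SubtreeAt T (d + 1) v) :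
    ∃ l r, SubtreeAt T d (node l r) ∧ (v = l ∨ v = r) := by
  generalize hd : d + 1 = d1 at h
  induction h generalizing d with
  | refl t => omega
  | @left l r v d' h ih =>
      rcases Nat.eq_zero_or_pos d with rfl | hpos
      · have : d' = 0 := by omega
        subst this
        cases h
        exact ⟨l, r, SubtreeAt.refl _, Or.inl rfl⟩
      · obtain ⟨m, rfl⟩ := Nat.exists_eq_succ_of_ne_zero (Nat.pos_iff_ne_zero.mp hpos)
        obtain ⟨a, b, hab, hv⟩ := ih (d := m) (by omega)
        exact ⟨a, b, SubtreeAt.left hab, hv⟩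
  | @right l r v d' h ih =>
      rcases Nat.eq_zero_or_pos d with rfl | hpos
      · have : d' = 0 := by omega
        subst this
        cases h
        exact ⟨l, r, SubtreeAt.refl _, Or.inr rfl⟩
      · obtain ⟨m, rfl⟩ := Nat.exists_eq_succ_of_ne_zero (Nat.pos_iff_ne_zero.mp hpos)
        obtain ⟨a, b, hab, hv⟩ := ih (d := m) (by omega)
        exact ⟨a, b, SubtreeAt.right hab, hv⟩

end BTree

namespace BTree

lemma uncle_left {T a b c : BTree} {d : ℕ}
    (hopt : ∀ T' : BTree, T'.leaves = T.leaves → T.cost ≤ T'.cost)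
    (hg : SubtreeAt T d (node (node a b) c)) :
    a.weight ≤ c.weight ∧ b.weight ≤ c.weight := by
  obtain ⟨T1, hT1, hc1⟩ := replace hg (node (node c b) a)
    (by simp [leaves, add_comm, add_left_comm, add_assoc])
  obtain ⟨T2, hT2, hc2⟩ := replace hg (node (node a c) b)
    (by simp [leaves, add_comm, add_left_comm, add_assoc])
  have h1 := hopt T1 hT1
  have h2 := hopt T2 hT2
  simp only [cost, weight] at hc1 hc2
  omega

lemma uncle_right {T a b c : BTree} {d : ℕ}
    (hopt : ∀ T' : BTree, T'.leaves = T.leaves → T.cost ≤ T'.cost)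
    (hg : SubtreeAt T d (node c (node a b))) :
    a.weight ≤ c.weight ∧ b.weight ≤ c.weight := by
  obtain ⟨T1, hT1, hc1⟩ := replace hg (node a (node c b))
    (by simp [leaves, add_comm, add_left_comm, add_assoc])
  obtain ⟨T2, hT2, hc2⟩ := replace hg (node b (node a c))
    (by simp [leaves, add_comm, add_left_comm, add_assoc])
  have h1 := hopt T1 hT1
  have h2 := hopt T2 hT2
  simp only [cost, weight] at hc1 hc2
  omega

lemma main_nat {T : BTree}
    (hopt : ∀ T' : BTree, T'.leaves = T.leaves → T.cost ≤ T'.cost) :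
    ∀ ℓ v, SubtreeAt T ℓ v → 2 ^ (ℓ / 2) * v.weight ≤ T.weight := by
  intro ℓ
  induction ℓ using Nat.strong_induction_on with
  | _ ℓ ih =>
    match ℓ with
    | 0 =>
      intro v h
      cases h
      simp
    | 1 =>
      intro v h
      simpa using weight_mono h
    | (d + 2) =>
      intro v h
      obtain ⟨l, r, hp, hvlr⟩ := parent_exists h
      obtain ⟨p, q, hg, hpq⟩ := parent_exists hp
      have h2 : 2 * v.weight ≤ (node p q).weight := by
        rcases hpq with hpq | hpq
        · subst hpq
          obtain ⟨ha, hb⟩ := uncle_left hopt hg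
          simp only [weight]
          rcases hvlr with rfl | rfl <;> omega
        · subst hpq
          obtain ⟨ha, hb⟩ := uncle_right hopt hg
          simp only [weight]
          rcases hvlr with rfl | rfl <;> omega
      have ihd := ih d (by omega) _ hg
      have hpow : (d + 2) / 2 = d / 2 + 1 := by omega
      calc 2 ^ ((d + 2) / 2) * v.weight = 2 ^ (d / 2) * (2 * v.weight) := by
            rw [hpow, pow_succ]; ring
        _ ≤ 2 ^ (d / 2) * (node p q).weight := Nat.mul_le_mul_left _ h2
        _ ≤ T.weight := ihd

end BTree


/-- In an optimal (minimum weighted external path length) binary tree on positive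
leaf weights summing to `n`, every node at depth `ℓ` has weight at most
`n / 2^⌊ℓ/2⌋`. -/
theorem optimal_tree_weight_at_depth (T : BTree)
    (hpos : ∀ w ∈ T.leaves, 0 < w)
    (hopt : ∀ T' : BTree, T'.leaves = T.leaves → T.cost ≤ T'.cost)
    (v : BTree) (ℓ : ℕ) (hv : BTree.SubtreeAt T ℓ v) :
    (v.weight : ℝ) ≤ (T.weight : ℝ) / 2 ^ (ℓ / 2) := by
  have h := BTree.main_nat hopt ℓ v hv
  rw [le_div_iff₀ (by positivity)]
  calc (v.weight : ℝ) * 2 ^ (ℓ / 2) = ((2 ^ (ℓ / 2) * v.weight : ℕ) : ℝ) := by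
        push_cast; ring
    _ ≤ (T.weight : ℝ) := by exact_mod_cast h
end

section
/- The number of down steps of a permutation π equals the number of down steps of the sequence of its strict run heads: if h₁ < h₂ < ⋯ < h_s are the first positions of the strict runs of π, then #{i < n : π(i+1) < π(i)} = #{j < s : π(h_{j+1}) < π(h_j)}. -/
/-- The number of down steps of a permutation equals the number of descents in
the sequence of values at its strict run heads (where a head is position `0` or
any position whose value is not one plus the previous value). -/
theorem downsteps_eq_descents_of_strict_run_heads (n s : ℕ) (hn : 0 < n)
    (hs : 0 < s) (π : Equiv.Perm (Fin n)) (h : Fin s → Fin n)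
    (hmono : StrictMono h)
    (hheads : ∀ i : Fin n, (∃ j, h j = i) ↔
      ((i : ℕ) = 0 ∨ ∃ (k : ℕ) (hk : k + 1 < n), (i : ℕ) = k + 1 ∧
        (π i : ℕ) ≠ (π ⟨k, Nat.lt_of_succ_lt hk⟩ : ℕ) + 1)) :
    (Finset.univ.filter fun i : Fin (n - 1) =>
        π (Fin.cast (Nat.succ_pred_eq_of_pos hn) i.succ) <
          π (Fin.cast (Nat.succ_pred_eq_of_pos hn) i.castSucc)).card =
    (Finset.univ.filter fun j : Fin (s - 1) =>
        π (h (Fin.cast (Nat.succ_pred_eq_of_pos hs) j.succ)) <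
          π (h (Fin.cast (Nat.succ_pred_eq_of_pos hs) j.castSucc))).card := by
  -- value function
  set p : Fin n → ℕ := fun i => (π i : ℕ) with hp
  have pinj : ∀ a b : Fin n, p a = p b → a = b := by
    intro a b hab
    exact π.injective (Fin.ext hab)
  -- head predicate in ℕ
  have hA : ∀ (k : ℕ) (hk : k + 1 < n),
      (¬ ∃ j : Fin s, (h j : ℕ) = k + 1) →
      p ⟨k+1, hk⟩ = p ⟨k, Nat.lt_of_succ_lt hk⟩ + 1 := by
    intro k hk hnh
    have h1 : ¬ (((⟨k+1, hk⟩ : Fin n) : ℕ) = 0 ∨ ∃ (k' : ℕ) (hk' : k' + 1 < n),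
        ((⟨k+1, hk⟩ : Fin n) : ℕ) = k' + 1 ∧
        (π ⟨k+1, hk⟩ : ℕ) ≠ (π ⟨k', Nat.lt_of_succ_lt hk'⟩ : ℕ) + 1) := by
      intro hr
      rcases (hheads ⟨k+1, hk⟩).2 hr with ⟨j, hj⟩
      exact hnh ⟨j, by rw [hj]⟩
    push_neg at h1
    exact h1.2 k hk rfl
  -- h 0 = 0
  have h0 : (h ⟨0, hs⟩ : ℕ) = 0 := by
    rcases (hheads ⟨0, hn⟩).2 (Or.inl rfl) with ⟨j, hj⟩
    have : h ⟨0, hs⟩ ≤ h j := hmono.monotone (Fin.mk_le_of_le_val (Nat.zero_le _))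
    rw [hj] at this
    exact Nat.le_zero.mp this
  -- no head strictly between consecutive heads
  have hC : ∀ (j : ℕ) (hj1 : j + 1 < s) (t : ℕ),
      (h ⟨j, Nat.lt_of_succ_lt hj1⟩ : ℕ) < t → t < (h ⟨j+1, hj1⟩ : ℕ) →
      ¬ ∃ m : Fin s, (h m : ℕ) = t := by
    intro j hj1 t h1 h2 ⟨m, hm⟩
    rw [← hm] at h1 h2
    have l1 : (⟨j, Nat.lt_of_succ_lt hj1⟩ : Fin s) < m := hmono.lt_iff_lt.mp h1
    have l2 : m < (⟨j+1, hj1⟩ : Fin s) := hmono.lt_iff_lt.mp h2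
    simp only [Fin.lt_def] at l1 l2
    omega
  -- fill lemma: run values increase by one
  have hB : ∀ (a : Fin n) (d : ℕ) (hd : (a : ℕ) + d < n),
      (∀ t, 0 < t → t ≤ d → ¬ ∃ m : Fin s, (h m : ℕ) = (a : ℕ) + t) →
      p ⟨(a : ℕ) + d, hd⟩ = p a + d := by
    intro a d
    induction d with
    | zero => intro hd _; simp
    | succ d ih =>
      intro hd hno
      have hd' : (a : ℕ) + d < n := by omega
      have hstep : p ⟨(a : ℕ) + d + 1, by omega⟩ = p ⟨(a : ℕ) + d, hd'⟩ + 1 := by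
        exact hA ((a : ℕ) + d) (by omega) (by
          have h2 := hno (d+1) (Nat.succ_pos d) le_rfl
          have heq : (a : ℕ) + (d + 1) = (a : ℕ) + d + 1 := by omega
          rw [heq] at h2
          exact h2)
      have := ih hd' (fun t ht htd => hno t ht (by omega))
      have heq : ((a : ℕ) + (d + 1)) = ((a : ℕ) + d + 1) := by omega
      simp only [heq]
      omega
  -- key descent transfer lemma
  have hD : ∀ (j : ℕ) (hj1 : j + 1 < s),
      1 ≤ (h ⟨j+1, hj1⟩ : ℕ) ∧
      ((h ⟨j, Nat.lt_of_succ_lt hj1⟩ : ℕ) ≤ (h ⟨j+1, hj1⟩ : ℕ) - 1) ∧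
      (∀ c : Fin n, (c : ℕ) = (h ⟨j+1, hj1⟩ : ℕ) - 1 →
        (p (h ⟨j+1, hj1⟩) < p c ↔
          p (h ⟨j+1, hj1⟩) < p (h ⟨j, Nat.lt_of_succ_lt hj1⟩))) := by
    intro j hj1
    set a : Fin n := h ⟨j, Nat.lt_of_succ_lt hj1⟩ with ha
    set b : Fin n := h ⟨j+1, hj1⟩ with hb
    have hab : (a : ℕ) < (b : ℕ) := hmono (by simp [Fin.lt_def])
    have hb1 : 1 ≤ (b : ℕ) := by omega
    refine ⟨hb1, by omega, ?_⟩
    intro c hc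
    have hbn : (b : ℕ) - 1 < n := by omega
    have hcc : c = ⟨(b : ℕ) - 1, hbn⟩ := Fin.ext hc
    rw [hcc]
    -- value at b - 1
    have hfill : ∀ (d : ℕ) (hd : (a : ℕ) + d ≤ (b : ℕ) - 1),
        p ⟨(a : ℕ) + d, by omega⟩ = p a + d := by
      intro d hd
      exact hB a d (by omega) (fun t ht htd => hC j hj1 ((a : ℕ) + t)
        (by omega) (by omega))
    have hval : p ⟨(b : ℕ) - 1, hbn⟩ = p a + ((b : ℕ) - 1 - (a : ℕ)) := by
      have := hfill ((b : ℕ) - 1 - (a : ℕ)) (by omega)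
      convert this using 3
      omega
    constructor
    · intro hlt
      by_contra hge
      push_neg at hge
      have hm : p b = p a + (p b - p a) := by omega
      have hmlt : p b - p a < (b : ℕ) - 1 - (a : ℕ) := by omega
      have := hfill (p b - p a) (by omega)
      have heqb : (⟨(a : ℕ) + (p b - p a), by omega⟩ : Fin n) = b :=
        pinj _ _ (by omega)
      have : (a : ℕ) + (p b - p a) = (b : ℕ) := congrArg Fin.val heqb
      omega
    · intro hlt
      omega
  -- the bijection
  refine (Finset.card_bij
    (fun (j : Fin (s-1)) (_ : j ∈ Finset.univ.filter fun j : Fin (s - 1) =>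
        π (h (Fin.cast (Nat.succ_pred_eq_of_pos hs) j.succ)) <
          π (h (Fin.cast (Nat.succ_pred_eq_of_pos hs) j.castSucc))) =>
      (⟨(h (Fin.cast (Nat.succ_pred_eq_of_pos hs) j.succ) : ℕ) - 1, by
        have hj1 : (j : ℕ) + 1 < s := by omega
        have := (hD j hj1).1
        have hcast : (Fin.cast (Nat.succ_pred_eq_of_pos hs) j.succ) = ⟨(j:ℕ)+1, hj1⟩ := by
          apply Fin.ext; simp
        rw [hcast]
        have := (h ⟨(j:ℕ)+1, hj1⟩).isLt
        omega⟩ : Fin (n-1)))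
    ?_ ?_ ?_).symm
  · -- maps to
    intro j hj
    simp only [Finset.mem_filter, Finset.mem_univ, true_and, Fin.lt_def] at hj ⊢
    have hj1 : (j : ℕ) + 1 < s := by have := j.isLt; omega
    have e1 : Fin.cast (Nat.succ_pred_eq_of_pos hs) j.succ = ⟨(j : ℕ) + 1, hj1⟩ :=
      Fin.ext (by simp)
    have e2 : Fin.cast (Nat.succ_pred_eq_of_pos hs) j.castSucc =
        ⟨(j : ℕ), Nat.lt_of_succ_lt hj1⟩ := Fin.ext (by simp)
    rw [e1, e2] at hj
    obtain ⟨hb1, hab, hiff⟩ := hD j hj1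
    have hdown : p (h ⟨(j : ℕ) + 1, hj1⟩) <
        p ⟨(h ⟨(j : ℕ) + 1, hj1⟩ : ℕ) - 1, by have := (h ⟨(j:ℕ)+1, hj1⟩).isLt; omega⟩ :=
      (hiff _ rfl).mpr hj
    have e3 : Fin.cast (Nat.succ_pred_eq_of_pos hn)
        (Fin.succ (⟨(h (Fin.cast (Nat.succ_pred_eq_of_pos hs) j.succ) : ℕ) - 1, by
          rw [e1]; have := (h ⟨(j:ℕ)+1, hj1⟩).isLt; omega⟩ : Fin (n-1))) =
        h ⟨(j : ℕ) + 1, hj1⟩ := by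
      apply Fin.ext
      simp [e1]
      omega
    have e4 : Fin.cast (Nat.succ_pred_eq_of_pos hn)
        (Fin.castSucc (⟨(h (Fin.cast (Nat.succ_pred_eq_of_pos hs) j.succ) : ℕ) - 1, by
          rw [e1]; have := (h ⟨(j:ℕ)+1, hj1⟩).isLt; omega⟩ : Fin (n-1))) =
        (⟨(h ⟨(j : ℕ) + 1, hj1⟩ : ℕ) - 1, by
          have := (h ⟨(j:ℕ)+1, hj1⟩).isLt; omega⟩ : Fin n) := by
      apply Fin.ext
      simp [e1]
    rw [e3, e4]
    exact hdown
  · -- injective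
    intro j1 hj1 j2 hj2 heq
    have hs1 : (j1 : ℕ) + 1 < s := by have := j1.isLt; omega
    have hs2 : (j2 : ℕ) + 1 < s := by have := j2.isLt; omega
    have ec1 : Fin.cast (Nat.succ_pred_eq_of_pos hs) j1.succ = ⟨(j1 : ℕ) + 1, hs1⟩ :=
      Fin.ext (by simp)
    have ec2 : Fin.cast (Nat.succ_pred_eq_of_pos hs) j2.succ = ⟨(j2 : ℕ) + 1, hs2⟩ :=
      Fin.ext (by simp)
    have hv : (h (Fin.cast (Nat.succ_pred_eq_of_pos hs) j1.succ) : ℕ) - 1 =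
        (h (Fin.cast (Nat.succ_pred_eq_of_pos hs) j2.succ) : ℕ) - 1 :=
      congrArg Fin.val heq
    rw [ec1, ec2] at hv
    have hb1 := (hD j1 hs1).1
    have hb2 := (hD j2 hs2).1
    have hveq : (h ⟨(j1 : ℕ) + 1, hs1⟩ : ℕ) = (h ⟨(j2 : ℕ) + 1, hs2⟩ : ℕ) := by omega
    have := hmono.injective (Fin.ext hveq)
    have : (j1 : ℕ) + 1 = (j2 : ℕ) + 1 := congrArg Fin.val this
    exact Fin.ext (by omega)
  · -- surjective
    intro i hi
    simp only [Finset.mem_filter, Finset.mem_univ, true_and, Fin.lt_def] at hi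
    have hi1 : (i : ℕ) + 1 < n := by have := i.isLt; omega
    have e1 : Fin.cast (Nat.succ_pred_eq_of_pos hn) i.succ = ⟨(i : ℕ) + 1, hi1⟩ :=
      Fin.ext (by simp)
    have e2 : Fin.cast (Nat.succ_pred_eq_of_pos hn) i.castSucc =
        ⟨(i : ℕ), Nat.lt_of_succ_lt hi1⟩ := Fin.ext (by simp)
    rw [e1, e2] at hi
    have hi' : p ⟨(i : ℕ) + 1, hi1⟩ < p ⟨(i : ℕ), Nat.lt_of_succ_lt hi1⟩ := hi
    -- i+1 is a head
    have hhead : ∃ m : Fin s, (h m : ℕ) = (i : ℕ) + 1 := by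
      by_contra hc
      have := hA (i : ℕ) hi1 hc
      omega
    obtain ⟨m, hm⟩ := hhead
    have hm1 : 1 ≤ (m : ℕ) := by
      by_contra hc
      have hm0 : m = ⟨0, hs⟩ := Fin.ext (by show (m : ℕ) = 0; omega)
      rw [hm0] at hm
      omega
    have hms : (m : ℕ) - 1 + 1 < s := by have := m.isLt; omega
    have hjlt : (m : ℕ) - 1 < s - 1 := by omega
    have em : (⟨(m : ℕ) - 1 + 1, hms⟩ : Fin s) = m :=
      Fin.ext (by show (m : ℕ) - 1 + 1 = (m : ℕ); omega)
    have hcastj : Fin.cast (Nat.succ_pred_eq_of_pos hs)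
        (Fin.succ (⟨(m : ℕ) - 1, hjlt⟩ : Fin (s-1))) = m :=
      Fin.ext (by
        simp only [Fin.coe_cast, Fin.val_succ]
        show (m : ℕ) - 1 + 1 = (m : ℕ)
        omega)
    have hcastj' : Fin.cast (Nat.succ_pred_eq_of_pos hs)
        (Fin.castSucc (⟨(m : ℕ) - 1, hjlt⟩ : Fin (s-1))) =
        ⟨(m : ℕ) - 1, Nat.lt_of_succ_lt hms⟩ := Fin.ext (by simp)
    obtain ⟨hb1, hab, hiff⟩ := hD ((m : ℕ) - 1) hms
    have hbv : (h (⟨(m : ℕ) - 1 + 1, hms⟩ : Fin s) : ℕ) = (i : ℕ) + 1 := by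
      rw [em]; exact hm
    have q1 : p (h (⟨(m : ℕ) - 1 + 1, hms⟩ : Fin s)) = p ⟨(i : ℕ) + 1, hi1⟩ :=
      congrArg p (Fin.ext hbv)
    have hdown : p (h (⟨(m : ℕ) - 1 + 1, hms⟩ : Fin s)) <
        p ⟨(i : ℕ), Nat.lt_of_succ_lt hi1⟩ := by
      rw [q1]; exact hi'
    have hdesc0 : p (h (⟨(m : ℕ) - 1 + 1, hms⟩ : Fin s)) <
        p (h ⟨(m : ℕ) - 1, Nat.lt_of_succ_lt hms⟩) :=
      (hiff ⟨(i : ℕ), Nat.lt_of_succ_lt hi1⟩ (by show (i : ℕ) = _; omega)).mp hdown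
    have hdesc : p (h m) < p (h ⟨(m : ℕ) - 1, Nat.lt_of_succ_lt hms⟩) := by
      rw [← congrArg (fun x => p (h x)) em]; exact hdesc0
    refine ⟨⟨(m : ℕ) - 1, hjlt⟩, ?_, ?_⟩
    · simp only [Finset.mem_filter, Finset.mem_univ, true_and, Fin.lt_def]
      rw [hcastj, hcastj']
      exact hdesc
    · apply Fin.ext
      show (h (Fin.cast (Nat.succ_pred_eq_of_pos hs)
        (Fin.succ (⟨(m : ℕ) - 1, hjlt⟩ : Fin (s-1)))) : ℕ) - 1 = (i : ℕ)
      rw [hcastj, hm]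
      omega
end
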